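/- If A is an ECTA with maximal constant cmax and θ ∈ L(A), then the untimed word Untime(θ) is accepted by the existential region automaton RA(∃, Reg_d, A) built from the refined (Bouyer-style) regions; i.e., Untime(L(A)) ⊆ L(RA(∃,Reg_d,A)). Moreover, since the refined regions refine the Alur–Dill regions, L(RA(∃,Reg_d,A)) ⊆ L(RA(∃,Reg,A)). -/
import Mathlib


/-- Event clocks over alphabet `α`: a history clock and a prophecy clock per letter. -/
inductive Clock (α : Type) where
  | hist (a : α)
  | proph (a : α)
deriving DecidableEq

/-- A valuation assigns to each event clock a real value or `⊥` (here `none`). -/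
def Val (α : Type) := Clock α → Option ℝ

/-- All defined clock values are nonnegative. -/
def Nonneg {α : Type} (v : Val α) : Prop := ∀ x r, v x = some r → 0 ≤ r

/-- `v[x := d]`. -/
def Val.set {α : Type} [DecidableEq α] (v : Val α) (x : Clock α) (d : Option ℝ) : Val α :=
  fun y => if y = x then d else v y

/-- Time elapse: history clocks increase, prophecy clocks decrease; `⊥` unaffected. -/
def elapse {α : Type} (v : Val α) (t : ℝ) : Val α := fun c =>
  match c with
  | .hist a => (v (.hist a)).map (· + t)
  | .proph a => (v (.proph a)).map (· - t)

/-- Time elapse by `t` is allowed: `t ≥ 0` and all prophecy clocks are at least `t`. -/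
def CanElapse {α : Type} (v : Val α) (t : ℝ) : Prop :=
  0 ≤ t ∧ ∀ a r, v (.proph a) = some r → t ≤ r

def InitialVal {α : Type} (v : Val α) : Prop := ∀ a, v (.hist a) = none

def FinalVal {α : Type} (v : Val α) : Prop := ∀ a, v (.proph a) = none

/-- Clock constraints: Boolean combinations of atomic constraints `x ∼ c`. -/
inductive Constr (α : Type) where
  | tt
  | lt (x : Clock α) (c : ℕ)
  | gt (x : Clock α) (c : ℕ)
  | eq (x : Clock α) (c : ℕ)
  | not (ψ : Constr α)
  | and (ψ₁ ψ₂ : Constr α)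

def Constr.sat {α : Type} (v : Val α) : Constr α → Prop
  | .tt => True
  | .lt x c => ∃ r, v x = some r ∧ r < (c : ℝ)
  | .gt x c => ∃ r, v x = some r ∧ (c : ℝ) < r
  | .eq x c => v x = some (c : ℝ)
  | .not ψ => ¬ Constr.sat v ψ
  | .and ψ₁ ψ₂ => Constr.sat v ψ₁ ∧ Constr.sat v ψ₂

/-- An event-clock automaton. -/
structure ECTA (α Q : Type) where
  init : Q
  edges : Set (Q × α × Constr α × Q)
  accept : Set Q

/-- Discrete step on letter `σ`: there is a nonnegative valuation `v̄` with
`v̄[→σ := 0] = v`, `v̄[←σ := 0] = v'` and `v̄ ⊨ ψ` for some edge `(q,σ,ψ,q')`. -/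
def DStep {α Q : Type} [DecidableEq α] (A : ECTA α Q) (q : Q) (v : Val α) (σ : α)
    (q' : Q) (v' : Val α) : Prop :=
  ∃ ψ, (q, σ, ψ, q') ∈ A.edges ∧
    ∃ vb : Val α, Nonneg vb ∧
      vb.set (.proph σ) (some 0) = v ∧
      vb.set (.hist σ) (some 0) = v' ∧
      Constr.sat vb ψ

/-- Combined step: elapse `t`, then fire a `σ`-edge. -/
def TStep {α Q : Type} [DecidableEq α] (A : ECTA α Q) (q : Q) (v : Val α) (t : ℝ) (σ : α)
    (q' : Q) (v' : Val α) : Prop :=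
  CanElapse v t ∧ DStep A q (elapse v t) σ q' v'

/-- Acceptance of a timed word (given by successive delays) from state `(q,v)`. -/
inductive ECAcc {α Q : Type} [DecidableEq α] (A : ECTA α Q) : Q → Val α → List (ℝ × α) → Prop where
  | nil : ∀ q v, q ∈ A.accept → FinalVal v → ECAcc A q v []
  | cons : ∀ q v t σ q' v' w, TStep A q v t σ q' v' → ECAcc A q' v' w → ECAcc A q v ((t, σ) :: w)

/-- `Untime(L(A,(q,v)))`. -/
def UntimedLangFrom {α Q : Type} [DecidableEq α] (A : ECTA α Q) (q : Q) (v : Val α) :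
    Set (List α) :=
  { w | ∃ θ : List (ℝ × α), ECAcc A q v θ ∧ θ.map Prod.snd = w }

/-- The timed language of `A` (initialized runs). -/
def TLang {α Q : Type} [DecidableEq α] (A : ECTA α Q) : Set (List (ℝ × α)) :=
  { θ | ∃ v, Nonneg v ∧ InitialVal v ∧ ECAcc A A.init v θ }

/-- `Untime(L(A))`. -/
def UntimedLang {α Q : Type} [DecidableEq α] (A : ECTA α Q) : Set (List α) :=
  { w | ∃ v, Nonneg v ∧ InitialVal v ∧ w ∈ UntimedLangFrom A A.init v }
/-- Distance to the relevant integer boundary: `⌈r⌉ − r` for history clocks,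
`r − ⌊r⌋` for prophecy clocks. -/
noncomputable def fracDist {α : Type} : Clock α → ℝ → ℝ
  | .hist _, r => (⌈r⌉ : ℝ) - r
  | .proph _, r => r - (⌊r⌋ : ℝ)

/-- Signed value used for diagonal constraints: prophecy clocks are negated. -/
def sval {α : Type} : Clock α → ℝ → ℝ
  | .hist _, r => r
  | .proph _, r => -r

/-- The Alur–Dill region equivalence with maximal constant `cmax`. -/
def RegEq {α : Type} (cmax : ℕ) (v₁ v₂ : Val α) : Prop :=
  (∀ x, v₁ x = none ↔ v₂ x = none) ∧
  (∀ x r₁ r₂, v₁ x = some r₁ → v₂ x = some r₂ →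
      (((cmax : ℝ) < r₁ ∧ (cmax : ℝ) < r₂) ∨ (⌈r₁⌉ = ⌈r₂⌉ ∧ ⌊r₁⌋ = ⌊r₂⌋))) ∧
  (∀ x y rx₁ ry₁ rx₂ ry₂, v₁ x = some rx₁ → v₁ y = some ry₁ →
      v₂ x = some rx₂ → v₂ y = some ry₂ → rx₁ ≤ (cmax : ℝ) → ry₁ ≤ (cmax : ℝ) →
      (fracDist x rx₁ ≤ fracDist y ry₁ ↔ fracDist x rx₂ ≤ fracDist y ry₂))

/-- The refined (Bouyer-style) region equivalence. -/
def RegEqD {α : Type} (cmax : ℕ) (v₁ v₂ : Val α) : Prop :=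
  RegEq cmax v₁ v₂ ∧
  (∀ x y rx₁ ry₁ rx₂ ry₂, v₁ x = some rx₁ → v₁ y = some ry₁ →
      v₂ x = some rx₂ → v₂ y = some ry₂ →
      ((cmax : ℝ) < rx₁ ∨ (cmax : ℝ) < ry₁) →
      ((2 * (cmax : ℝ) < |sval x rx₁ - sval y ry₁| ∧ 2 * (cmax : ℝ) < |sval x rx₂ - sval y ry₂|) ∨
       (⌊sval x rx₁ - sval y ry₁⌋ = ⌊sval x rx₂ - sval y ry₂⌋ ∧
        ⌈sval x rx₁ - sval y ry₁⌉ = ⌈sval x rx₂ - sval y ry₂⌉)))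

/-- A region of an equivalence `E`: an equivalence class of nonnegative valuations. -/
def IsRegionOf {α : Type} (E : Val α → Val α → Prop) (r : Set (Val α)) : Prop :=
  ∃ v, Nonneg v ∧ r = { v' | Nonneg v' ∧ E v v' }

def InitialRegion {α : Type} (r : Set (Val α)) : Prop := ∀ v ∈ r, InitialVal v
def FinalRegion {α : Type} (r : Set (Val α)) : Prop := ∀ v ∈ r, FinalVal v

/-- Acceptance in the universal region automaton `RA(∀,E,A)`. -/
inductive UAcc {α Q : Type} [DecidableEq α] (A : ECTA α Q) (E : Val α → Val α → Prop) :
    Q → Set (Val α) → List α → Prop where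
  | nil : ∀ q r, q ∈ A.accept → IsRegionOf E r → FinalRegion r → UAcc A E q r []
  | cons : ∀ q r σ q' r' w, IsRegionOf E r → IsRegionOf E r' →
      (∀ v ∈ r, ∃ t v', v' ∈ r' ∧ TStep A q v t σ q' v') →
      UAcc A E q' r' w → UAcc A E q r (σ :: w)

/-- Acceptance in the existential region automaton `RA(∃,E,A)`. -/
inductive EAcc {α Q : Type} [DecidableEq α] (A : ECTA α Q) (E : Val α → Val α → Prop) :
    Q → Set (Val α) → List α → Prop where
  | nil : ∀ q r, q ∈ A.accept → IsRegionOf E r → FinalRegion r → EAcc A E q r []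
  | cons : ∀ q r σ q' r' w, IsRegionOf E r → IsRegionOf E r' →
      (∃ v ∈ r, ∃ t v', v' ∈ r' ∧ TStep A q v t σ q' v') →
      EAcc A E q' r' w → EAcc A E q r (σ :: w)

/-- The language of the universal region automaton. -/
def ULang {α Q : Type} [DecidableEq α] (A : ECTA α Q) (E : Val α → Val α → Prop) :
    Set (List α) :=
  { w | ∃ r, IsRegionOf E r ∧ InitialRegion r ∧ UAcc A E A.init r w }

/-- The language of the existential region automaton. -/
def ELang {α Q : Type} [DecidableEq α] (A : ECTA α Q) (E : Val α → Val α → Prop) :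
    Set (List α) :=
  { w | ∃ r, IsRegionOf E r ∧ InitialRegion r ∧ EAcc A E A.init r w }

/-- All constants in a constraint are at most `k`. -/
def Constr.BoundedBy {α : Type} (k : ℕ) : Constr α → Prop
  | .tt => True
  | .lt _ c => c ≤ k
  | .gt _ c => c ≤ k
  | .eq _ c => c ≤ k
  | .not ψ => Constr.BoundedBy k ψ
  | .and ψ₁ ψ₂ => Constr.BoundedBy k ψ₁ ∧ Constr.BoundedBy k ψ₂

/-- `cmax` bounds all constants appearing in the guards of `A`. -/
def MaxConstLe {α Q : Type} (A : ECTA α Q) (k : ℕ) : Prop :=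
  ∀ e ∈ A.edges, Constr.BoundedBy k e.2.2.1

lemma regEq_refl {α : Type} (cmax : ℕ) (v : Val α) : RegEq cmax v v := by
  refine ⟨fun x => Iff.rfl, ?_, ?_⟩
  · intro x r₁ r₂ h1 h2
    rw [h1] at h2; injection h2 with h; subst h
    exact Or.inr ⟨rfl, rfl⟩
  · intro x y rx₁ ry₁ rx₂ ry₂ hx1 hy1 hx2 hy2 _ _
    rw [hx1] at hx2; injection hx2 with h; subst h
    rw [hy1] at hy2; injection hy2 with h; subst h
    exact Iff.rfl

lemma regEqD_refl {α : Type} (cmax : ℕ) (v : Val α) : RegEqD cmax v v := by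
  refine ⟨regEq_refl cmax v, ?_⟩
  intro x y rx₁ ry₁ rx₂ ry₂ hx1 hy1 hx2 hy2 _
  rw [hx1] at hx2; injection hx2 with h; subst h
  rw [hy1] at hy2; injection hy2 with h; subst h
  exact Or.inr ⟨rfl, rfl⟩

lemma regEqD_imp {α : Type} {cmax : ℕ} {v v' : Val α} (h : RegEqD cmax v v') :
    RegEq cmax v v' := h.1

/-- The class of `v` under `E`. -/
def cls {α : Type} (E : Val α → Val α → Prop) (v : Val α) : Set (Val α) :=
  { v' | Nonneg v' ∧ E v v' }

lemma isRegion_cls {α : Type} (E : Val α → Val α → Prop) (v : Val α) (hv : Nonneg v) :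
    IsRegionOf E (cls E v) := ⟨v, hv, rfl⟩

lemma mem_cls_regEqD {α : Type} (cmax : ℕ) (v : Val α) (hv : Nonneg v) :
    v ∈ cls (RegEqD cmax) v := ⟨hv, regEqD_refl cmax v⟩

lemma final_of_regEq {α : Type} {cmax : ℕ} {v v' : Val α} (h : RegEq cmax v v')
    (hf : FinalVal v) : FinalVal v' := fun a => ((h.1 (.proph a)).mp (hf a))

lemma final_of_regEq' {α : Type} {cmax : ℕ} {v v' : Val α} (h : RegEq cmax v v')
    (hf : FinalVal v') : FinalVal v := fun a => ((h.1 (.proph a)).mpr (hf a))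

lemma initial_of_regEq {α : Type} {cmax : ℕ} {v v' : Val α} (h : RegEq cmax v v')
    (hf : InitialVal v) : InitialVal v' := fun a => ((h.1 (.hist a)).mp (hf a))

lemma nonneg_of_dstep {α Q : Type} [DecidableEq α] {A : ECTA α Q} {q : Q} {v : Val α}
    {σ : α} {q' : Q} {v' : Val α} (h : DStep A q v σ q' v') : Nonneg v' := by
  obtain ⟨ψ, _, vb, hnn, _, hset, _⟩ := h
  intro x r hx
  subst hset
  unfold Val.set at hx
  by_cases hc : x = Clock.hist σ
  · simp [hc] at hx; simp [← hx]
  · simp [hc] at hx; exact hnn x r hx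

/-- From an accepting run of `A` we obtain an accepting run of `RA(∃,Reg_d,A)`. -/
lemma ecacc_to_eacc {α Q : Type} [DecidableEq α] (A : ECTA α Q) (cmax : ℕ) :
    ∀ q v θ, ECAcc A q v θ → Nonneg v →
      EAcc A (RegEqD cmax) q (cls (RegEqD cmax) v) (θ.map Prod.snd) := by
  intro q v θ h
  induction h with
  | nil q v hq hf =>
      intro hnn
      exact EAcc.nil q _ hq (isRegion_cls _ v hnn)
        (fun v' hv' => final_of_regEq hv'.2.1 hf)
  | cons q v t σ q' v' w hstep _ ih =>
      intro hnn
      have hnn' : Nonneg v' := nonneg_of_dstep hstep.2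
      exact EAcc.cons q _ σ q' _ _ (isRegion_cls _ v hnn) (isRegion_cls _ v' hnn')
        ⟨v, mem_cls_regEqD cmax v hnn, t, v', mem_cls_regEqD cmax v' hnn', hstep⟩
        (ih hnn')

/-- Transfer of existential acceptance along the refinement `Reg_d ⇒ Reg`. -/
lemma eacc_refine {α Q : Type} [DecidableEq α] (A : ECTA α Q) (cmax : ℕ) :
    ∀ q r w, EAcc A (RegEqD cmax) q r w →
      ∀ r₂, IsRegionOf (RegEq cmax) r₂ → r ⊆ r₂ → EAcc A (RegEq cmax) q r₂ w := by
  intro q r w h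
  induction h with
  | nil q r hq hr hfr =>
      intro r₂ hr₂ hsub
      obtain ⟨v, hv, rfl⟩ := hr
      obtain ⟨v₂, hv₂, rfl⟩ := hr₂
      have hvmem : v ∈ {v' | Nonneg v' ∧ RegEqD cmax v v'} := ⟨hv, regEqD_refl cmax v⟩
      have hfv : FinalVal v := hfr v hvmem
      have hfv₂ : FinalVal v₂ := final_of_regEq' (hsub hvmem).2 hfv
      exact EAcc.nil q _ hq ⟨v₂, hv₂, rfl⟩
        (fun v' hv' => final_of_regEq hv'.2 hfv₂)
  | cons q r σ q' r' w hr hr' hex _ ih =>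
      intro r₂ hr₂ hsub
      obtain ⟨v', hv', hr'eq⟩ := hr'
      have hsub' : r' ⊆ cls (RegEq cmax) v' := by
        intro u hu
        rw [hr'eq] at hu
        exact ⟨hu.1, regEqD_imp hu.2⟩
      obtain ⟨u, hu, t, u', hu', hstep⟩ := hex
      exact EAcc.cons q r₂ σ q' _ w hr₂ (isRegion_cls _ v' hv')
        ⟨u, hsub hu, t, u', hsub' hu', hstep⟩
        (ih _ (isRegion_cls _ v' hv') hsub')

/-- `Untime(L(A)) ⊆ L(RA(∃,Reg_d,A))` and, since refined regions refine the
Alur–Dill regions, `L(RA(∃,Reg_d,A)) ⊆ L(RA(∃,Reg,A))`. -/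
theorem untimed_lang_subset_existential_refined_region_lang
    {α Q : Type} [DecidableEq α] (A : ECTA α Q) (cmax : ℕ)
    (hmax : MaxConstLe A cmax) :
    UntimedLang A ⊆ ELang A (RegEqD cmax) ∧
    ELang A (RegEqD cmax) ⊆ ELang A (RegEq cmax) := by
  constructor
  · rintro w ⟨v, hnn, hinit, θ, hacc, rfl⟩
    refine ⟨cls (RegEqD cmax) v, isRegion_cls _ v hnn, ?_, ?_⟩
    · intro v' hv'
      exact initial_of_regEq (regEqD_imp hv'.2) hinit
    · exact ecacc_to_eacc A cmax _ v θ hacc hnn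
  · rintro w ⟨r, hr, hinitr, hacc⟩
    obtain ⟨v, hv, hreq⟩ := hr
    have hvmem : v ∈ r := by rw [hreq]; exact ⟨hv, regEqD_refl cmax v⟩
    refine ⟨cls (RegEq cmax) v, isRegion_cls _ v hv, ?_, ?_⟩
    · intro v' hv'
      exact initial_of_regEq hv'.2 (hinitr v hvmem)
    · refine eacc_refine A cmax _ r w hacc _ (isRegion_cls _ v hv) ?_
      intro u hu
      rw [hreq] at hu
      exact ⟨hu.1, regEqD_imp hu.2⟩
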